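/- For the paraboloid $\Sigma=\{x_3=\alpha(x_1^2+x_2^2)\}$ with $\alpha>0$ and defining function $u=x_3-\alpha(x_1^2+x_2^2)$, the sub-Riemannian Gaussian curvature at non-characteristic points equals $\mathcal{K}_0=-\frac{1}{1+16\alpha^2}\cdot\frac{2}{x_1^2+x_2^2}$. -/

import Mathlib

/-- The left-invariant vector field `X₁ = ∂₁ - (x₂/2)∂₃` acting on a function. -/
noncomputable def Xone (f : ℝ × ℝ × ℝ → ℝ) (x : ℝ × ℝ × ℝ) : ℝ :=
  deriv (fun s => f (s, x.2.1, x.2.2)) x.1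
    - x.2.1 / 2 * deriv (fun s => f (x.1, x.2.1, s)) x.2.2

/-- The left-invariant vector field `X₂ = ∂₂ + (x₁/2)∂₃` acting on a function. -/
noncomputable def Xtwo (f : ℝ × ℝ × ℝ → ℝ) (x : ℝ × ℝ × ℝ) : ℝ :=
  deriv (fun s => f (x.1, s, x.2.2)) x.2.1
    + x.1 / 2 * deriv (fun s => f (x.1, x.2.1, s)) x.2.2

/-- The vertical vector field `X₃ = ∂₃` acting on a function. -/
noncomputable def Xthree (f : ℝ × ℝ × ℝ → ℝ) (x : ℝ × ℝ × ℝ) : ℝ :=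
  deriv (fun s => f (x.1, x.2.1, s)) x.2.2

/-- Norm of the horizontal gradient `∇_H u = (X₁u, X₂u)`. -/
noncomputable def normH (u : ℝ × ℝ × ℝ → ℝ) (x : ℝ × ℝ × ℝ) : ℝ :=
  Real.sqrt ((Xone u x) ^ 2 + (Xtwo u x) ^ 2)

lemma uXone (α : ℝ) (y : ℝ × ℝ × ℝ) :
    Xone (fun y => y.2.2 - α * (y.1 ^ 2 + y.2.1 ^ 2)) y = -(2 * α * y.1) - y.2.1 / 2 := by
  have h1 : HasDerivAt (fun s : ℝ => y.2.2 - α * (s ^ 2 + y.2.1 ^ 2)) (-(2 * α * y.1)) y.1 := by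
    have := (((hasDerivAt_pow 2 y.1).add_const (y.2.1 ^ 2)).const_mul α).const_sub y.2.2
    simpa using this.congr_deriv (by ring)
  have h3 : HasDerivAt (fun s : ℝ => s - α * (y.1 ^ 2 + y.2.1 ^ 2)) 1 y.2.2 :=
    (hasDerivAt_id _).sub_const _
  simp [Xone, h1.deriv, h3.deriv]

lemma uXtwo (α : ℝ) (y : ℝ × ℝ × ℝ) :
    Xtwo (fun y => y.2.2 - α * (y.1 ^ 2 + y.2.1 ^ 2)) y = -(2 * α * y.2.1) + y.1 / 2 := by
  have h2 : HasDerivAt (fun s : ℝ => y.2.2 - α * (y.1 ^ 2 + s ^ 2)) (-(2 * α * y.2.1)) y.2.1 := by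
    have := (((hasDerivAt_pow 2 y.2.1).const_add (y.1 ^ 2)).const_mul α).const_sub y.2.2
    simpa using this.congr_deriv (by ring)
  have h3 : HasDerivAt (fun s : ℝ => s - α * (y.1 ^ 2 + y.2.1 ^ 2)) 1 y.2.2 :=
    (hasDerivAt_id _).sub_const _
  simp [Xtwo, h2.deriv, h3.deriv]

lemma uXthree (α : ℝ) (y : ℝ × ℝ × ℝ) :
    Xthree (fun y => y.2.2 - α * (y.1 ^ 2 + y.2.1 ^ 2)) y = 1 := by
  have h3 : HasDerivAt (fun s : ℝ => s - α * (y.1 ^ 2 + y.2.1 ^ 2)) 1 y.2.2 :=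
    (hasDerivAt_id _).sub_const _
  simp [Xthree, h3.deriv]

lemma unormH (α : ℝ) (y : ℝ × ℝ × ℝ) :
    normH (fun y => y.2.2 - α * (y.1 ^ 2 + y.2.1 ^ 2)) y
      = Real.sqrt ((2 * α * y.1 + y.2.1 / 2) ^ 2 + (2 * α * y.2.1 - y.1 / 2) ^ 2) := by
  rw [normH, uXone, uXtwo]
  congr 1
  ring

lemma hder (a b c d p : ℝ) (hQ : 0 < (a*p+b)^2 + (c*p+d)^2) :
    HasDerivAt (fun s : ℝ => (Real.sqrt ((a*s+b)^2 + (c*s+d)^2))⁻¹)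
      (-((2*(a*p+b)*a + 2*(c*p+d)*c) / (2*Real.sqrt ((a*p+b)^2+(c*p+d)^2)))
          / (Real.sqrt ((a*p+b)^2+(c*p+d)^2))^2) p := by
  have h1 : HasDerivAt (fun s : ℝ => a*s+b) a p := by
    simpa using ((hasDerivAt_id p).const_mul a).add_const b
  have h2 : HasDerivAt (fun s : ℝ => c*s+d) c p := by
    simpa using ((hasDerivAt_id p).const_mul c).add_const d
  have hq : HasDerivAt (fun s : ℝ => (a*s+b)^2 + (c*s+d)^2)
      (2*(a*p+b)*a + 2*(c*p+d)*c) p := by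
    have := (h1.pow 2).add (h2.pow 2)
    exact this.congr_deriv (by ring)
  have hs := hq.sqrt hQ.ne'
  have hne : Real.sqrt ((a*p+b)^2+(c*p+d)^2) ≠ 0 := (Real.sqrt_pos.mpr hQ).ne'
  exact hs.inv hne


/-- The sub-Riemannian Gaussian curvature of the surface `{u = 0}`:
`𝒦₀ = -(X₃u/‖∇_Hu‖)² - (X₂u/‖∇_Hu‖)X₁(X₃u/‖∇_Hu‖) + (X₁u/‖∇_Hu‖)X₂(X₃u/‖∇_Hu‖)`. -/
noncomputable def K0 (u : ℝ × ℝ × ℝ → ℝ) (x : ℝ × ℝ × ℝ) : ℝ :=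
  -(Xthree u x / normH u x) ^ 2
    - (Xtwo u x / normH u x) * Xone (fun y => Xthree u y / normH u y) x
    + (Xone u x / normH u x) * Xtwo (fun y => Xthree u y / normH u y) x

/-- For the paraboloid `{x₃ = α(x₁²+x₂²)}` with `α > 0` and defining function
`u = x₃ - α(x₁²+x₂²)`, the sub-Riemannian Gaussian curvature at
non-characteristic points equals `-(1/(1+16α²))·(2/(x₁²+x₂²))`. -/
theorem stmt17 (α : ℝ) (hα : 0 < α) (x : ℝ × ℝ × ℝ)
    (hx : x.2.2 = α * (x.1 ^ 2 + x.2.1 ^ 2))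
    (hnc : (Xone (fun y => y.2.2 - α * (y.1 ^ 2 + y.2.1 ^ 2)) x,
            Xtwo (fun y => y.2.2 - α * (y.1 ^ 2 + y.2.1 ^ 2)) x) ≠ (0, 0)) :
    K0 (fun y => y.2.2 - α * (y.1 ^ 2 + y.2.1 ^ 2)) x
      = -(1 / (1 + 16 * α ^ 2)) * (2 / (x.1 ^ 2 + x.2.1 ^ 2)) := by
  obtain ⟨x1, x2, x3⟩ := x
  rw [uXone, uXtwo] at hnc
  dsimp only at hnc hx ⊢
  have hAB : (2*α*x1 + x2/2) ≠ 0 ∨ (2*α*x2 - x1/2) ≠ 0 := by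
    by_contra h
    push_neg at h
    exact hnc (by rw [Prod.mk.injEq]; constructor <;> linarith [h.1, h.2])
  have hQpos : 0 < (2*α*x1 + x2/2)^2 + (2*α*x2 - x1/2)^2 := by
    rcases hAB with h|h <;> positivity
  have hrpos : 0 < x1^2 + x2^2 := by nlinarith [hQpos, sq_nonneg α]
  set S := Real.sqrt ((2*α*x1 + x2/2)^2 + (2*α*x2 - x1/2)^2) with hS
  have hS2 : S^2 = (2*α*x1 + x2/2)^2 + (2*α*x2 - x1/2)^2 := Real.sq_sqrt hQpos.le
  have hSpos : 0 < S := Real.sqrt_pos.mpr hQpos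
  have hg : (fun y => Xthree (fun y => y.2.2 - α * (y.1 ^ 2 + y.2.1 ^ 2)) y
        / normH (fun y => y.2.2 - α * (y.1 ^ 2 + y.2.1 ^ 2)) y)
      = fun y : ℝ×ℝ×ℝ => (Real.sqrt ((2*α*y.1 + y.2.1/2)^2 + (2*α*y.2.1 - y.1/2)^2))⁻¹ := by
    funext y
    rw [uXthree, unormH, one_div]
  have d1 : deriv (fun s => (Real.sqrt ((2*α*s + x2/2)^2 + (2*α*x2 - s/2)^2))⁻¹) x1
      = -((2*(2*α*x1+x2/2)*(2*α) + 2*(2*α*x2 - x1/2)*(-(1/2))) / (2*S)) / S^2 := by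
    have hpos1 : 0 < ((2*α)*x1 + x2/2)^2 + ((-(1/2))*x1 + (2*α*x2))^2 := by nlinarith [hQpos]
    have h := hder (2*α) (x2/2) (-(1/2)) (2*α*x2) x1 hpos1
    have efun : (fun s : ℝ => (Real.sqrt (((2*α)*s + x2/2)^2 + ((-(1/2))*s + (2*α*x2))^2))⁻¹)
        = (fun s : ℝ => (Real.sqrt ((2*α*s + x2/2)^2 + (2*α*x2 - s/2)^2))⁻¹) := by
      funext s
      congr 2
      ring
    rw [efun] at h
    rw [h.deriv]
    have hs1 : Real.sqrt (((2*α)*x1 + x2/2)^2 + ((-(1/2))*x1 + (2*α*x2))^2) = S := by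
      rw [hS]
      congr 1
      ring
    rw [hs1]
    ring
  have d2 : deriv (fun s => (Real.sqrt ((2*α*x1 + s/2)^2 + (2*α*s - x1/2)^2))⁻¹) x2
      = -((2*(2*α*x1+x2/2)*(1/2) + 2*(2*α*x2 - x1/2)*(2*α)) / (2*S)) / S^2 := by
    have hpos2 : 0 < ((1/2)*x2 + (2*α*x1))^2 + ((2*α)*x2 + (-(x1/2)))^2 := by nlinarith [hQpos]
    have h := hder (1/2) (2*α*x1) (2*α) (-(x1/2)) x2 hpos2
    have efun : (fun s : ℝ => (Real.sqrt (((1/2)*s + (2*α*x1))^2 + ((2*α)*s + (-(x1/2)))^2))⁻¹)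
        = (fun s : ℝ => (Real.sqrt ((2*α*x1 + s/2)^2 + (2*α*s - x1/2)^2))⁻¹) := by
      funext s
      congr 2
      ring
    rw [efun] at h
    rw [h.deriv]
    have hs2 : Real.sqrt (((1/2)*x2 + (2*α*x1))^2 + ((2*α)*x2 + (-(x1/2)))^2) = S := by
      rw [hS]
      congr 1
      ring
    rw [hs2]
    ring
  rw [K0, hg, uXone, uXtwo, uXthree, unormH]
  rw [Xone, Xtwo]
  dsimp only
  rw [d1, d2]
  simp only [deriv_const']
  rw [← hS]
  have hSne : S ≠ 0 := hSpos.ne'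
  have h16 : (0:ℝ) < 1 + 16*α^2 := by positivity
  field_simp
  ring_nf
  rw [show S^4 = (S^2)^2 by ring, hS2]
  ring
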